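/- Let μ^N be a probability measure on ℝ^d×ℝ^d with spatial marginal ρ^N, let ρ be a probability density on ℝ^d, and let u ∈ (L^∞ ∩ Lip)(ℝ^d;ℝ^d). Then the bounded Lipschitz distance between μ^N and the monokinetic measure ρ(x)dx ⊗ δ_{u(x)}(dv) satisfies: d_BL²(μ^N, ρ δ_u) ≤ C ∫_{ℝ^d×ℝ^d} |v − u(x)|² μ^N(dx,dv) + C d_BL²(ρ^N, ρ), where C > 0 depends only on ‖u‖_{Lip}. -/

import Mathlib

open MeasureTheory Set Finset
open scoped ENNReal

noncomputable section

/-- The bounded Lipschitz distance between two measures. -/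
def dBL {α : Type*} [MeasurableSpace α] [PseudoEMetricSpace α]
    (μ ν : Measure α) : ℝ :=
  sSup { r : ℝ | ∃ φ : α → ℝ, (∀ z, |φ z| ≤ 1) ∧ LipschitzWith 1 φ ∧
    r = |(∫ z, φ z ∂μ) - ∫ z, φ z ∂ν| }

/-- The monokinetic measure `ρ(x)dx ⊗ δ_{u(x)}(dv)` on phase space, i.e. the
pushforward of the measure with density `ρ` under `x ↦ (x, u(x))`, so that
`∫ φ d(ρδ_u) = ∫ φ(x,u(x)) ρ(x) dx`. -/
def monokinetic {d : ℕ} (ρ : EuclideanSpace ℝ (Fin d) → ℝ)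
    (u : EuclideanSpace ℝ (Fin d) → EuclideanSpace ℝ (Fin d)) :
    Measure (EuclideanSpace ℝ (Fin d) × EuclideanSpace ℝ (Fin d)) :=
  Measure.map (fun y => (y, u y)) (volume.withDensity (fun y => ENNReal.ofReal (ρ y)))

/-- convergence of the empirical measure: for a probability measure
`μ^N` on phase space with spatial marginal `ρ^N`, a probability density `ρ`, and a
bounded Lipschitz velocity field `u`,
`d_BL²(μ^N, ρδ_u) ≤ C ∫∫ |v−u(x)|² μ^N + C d_BL²(ρ^N, ρ)`,
with `C` depending only on `‖u‖_{Lip}`. -/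
theorem empirical_measure_convergence
    (d : ℕ) (Lu : ℝ) :
    ∃ C : ℝ, 0 < C ∧
      ∀ (Cu : ℝ),
      ∀ (μ : Measure (EuclideanSpace ℝ (Fin d) × EuclideanSpace ℝ (Fin d))),
        IsProbabilityMeasure μ →
        Integrable (fun z : EuclideanSpace ℝ (Fin d) × EuclideanSpace ℝ (Fin d) => ‖z.2‖ ^ 2) μ →
      ∀ (ρ : EuclideanSpace ℝ (Fin d) → ℝ),
        (∀ y, 0 ≤ ρ y) → Integrable ρ → (∫ y, ρ y) = 1 →
      ∀ (u : EuclideanSpace ℝ (Fin d) → EuclideanSpace ℝ (Fin d)),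
        (∀ y, ‖u y‖ ≤ Cu) → LipschitzWith (Real.toNNReal Lu) u →
        dBL μ (monokinetic ρ u) ^ 2
          ≤ C * (∫ z, ‖z.2 - u z.1‖ ^ 2 ∂μ)
            + C * dBL (μ.map Prod.fst)
                (volume.withDensity (fun y => ENNReal.ofReal (ρ y))) ^ 2 := by
  set Lr : ℝ := max 1 Lu with hLrdef
  have hLr1 : (1:ℝ) ≤ Lr := le_max_left _ _
  have hLr0 : (0:ℝ) < Lr := lt_of_lt_of_le one_pos hLr1
  refine ⟨8 * Lr ^ 2, by positivity, ?_⟩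
  intro Cu μ hμ hInt ρ hρ0 hρint hρ1 u hub hulip
  have hu_cont : Continuous u := hulip.continuous
  set ν₀ : Measure (EuclideanSpace ℝ (Fin d)) :=
    volume.withDensity (fun y => ENNReal.ofReal (ρ y)) with hν₀
  have hν₀prob : IsProbabilityMeasure ν₀ := by
    constructor
    rw [hν₀, withDensity_apply _ MeasurableSet.univ, setLIntegral_univ,
      ← ofReal_integral_eq_lintegral_ofReal hρint (Filter.Eventually.of_forall hρ0),
      hρ1, ENNReal.ofReal_one]
  have hρNprob : IsProbabilityMeasure (μ.map Prod.fst) :=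
    Measure.isProbabilityMeasure_map measurable_fst.aemeasurable
  set w : EuclideanSpace ℝ (Fin d) × EuclideanSpace ℝ (Fin d) → ℝ :=
    fun z => ‖z.2 - u z.1‖ with hwdef
  have hw_cont : Continuous w := (continuous_snd.sub (hu_cont.comp continuous_fst)).norm
  have hw0 : ∀ z, 0 ≤ w z := fun z => norm_nonneg _
  set S : ℝ := ∫ z, ‖z.2 - u z.1‖ ^ 2 ∂μ with hSdef
  have hS0 : 0 ≤ S := integral_nonneg fun z => by positivity
  set D : ℝ := dBL (μ.map Prod.fst) ν₀ with hDdef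
  have hD0 : 0 ≤ D := Real.sSup_nonneg (by rintro r ⟨φ, -, -, rfl⟩; exact abs_nonneg _)
  have hCu0 : (0:ℝ) ≤ Cu := le_trans (norm_nonneg _) (hub 0)
  -- integrability of w^2 and w
  have hIntw2 : Integrable (fun z => w z ^ 2) μ := by
    refine Integrable.mono' ((hInt.const_mul 2).add (integrable_const (2 * Cu ^ 2)))
      (hw_cont.pow 2).aestronglyMeasurable ?_
    filter_upwards with z
    have h1 : w z ≤ ‖z.2‖ + Cu := le_trans (norm_sub_le _ _) (by gcongr; exact hub _)
    have h2 := hw0 z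
    have h3 := norm_nonneg z.2
    simp only [Pi.add_apply]
    rw [Real.norm_eq_abs, abs_of_nonneg (by positivity)]
    nlinarith [sq_nonneg (‖z.2‖ - Cu), mul_le_mul h1 h1 h2 (by positivity : (0:ℝ) ≤ ‖z.2‖ + Cu)]
  have hSint : S = ∫ z, w z ^ 2 ∂μ := rfl
  have hIntw : Integrable w μ := by
    refine Integrable.mono' ((integrable_const 1).add hIntw2) hw_cont.aestronglyMeasurable ?_
    filter_upwards with z
    simp only [Pi.add_apply]
    rw [Real.norm_eq_abs, abs_of_nonneg (hw0 z)]
    nlinarith [hw0 z, sq_nonneg (w z - 1)]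
  -- main pointwise bound on dBL
  have key : dBL μ (monokinetic ρ u) ≤ 2 * Real.sqrt S + Lr * D := by
    apply Real.sSup_le
    · rintro r ⟨φ, hφb, hφlip, rfl⟩
      have hφcont : Continuous φ := hφlip.continuous
      set ψ : EuclideanSpace ℝ (Fin d) → ℝ := fun y => φ (y, u y) with hψdef
      have hψcont : Continuous ψ := hφcont.comp (continuous_id.prodMk hu_cont)
      have hmono : ∫ z, φ z ∂(monokinetic ρ u) = ∫ y, ψ y ∂ν₀ :=
        integral_map (continuous_id.prodMk hu_cont).aemeasurable hφcont.aestronglyMeasurable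
      have hfst : ∫ y, ψ y ∂(μ.map Prod.fst) = ∫ z, ψ z.1 ∂μ :=
        integral_map measurable_fst.aemeasurable hψcont.aestronglyMeasurable
      have hφint : Integrable φ μ := by
        refine Integrable.mono' (integrable_const 1) hφcont.aestronglyMeasurable ?_
        filter_upwards with z; rw [Real.norm_eq_abs]; exact hφb z
      have hψ₁int : Integrable (fun z => ψ z.1) μ := by
        refine Integrable.mono' (integrable_const 1)
          (hψcont.comp continuous_fst).aestronglyMeasurable ?_
        filter_upwards with z; rw [Real.norm_eq_abs]; exact hφb _
      have hT1 : |(∫ z, φ z ∂μ) - ∫ z, ψ z.1 ∂μ| ≤ 2 * Real.sqrt S := by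
        have hptw : ∀ z, |φ z - ψ z.1| ≤ w z := by
          intro z
          have h := hφlip.dist_le_mul z (z.1, u z.1)
          rw [Real.dist_eq, Prod.dist_eq, NNReal.coe_one, one_mul] at h
          simpa [dist_self, dist_eq_norm] using h
        have h1 : |(∫ z, φ z ∂μ) - ∫ z, ψ z.1 ∂μ| ≤ ∫ z, w z ∂μ := by
          rw [← integral_sub hφint hψ₁int]
          calc |∫ z, (φ z - ψ z.1) ∂μ| ≤ ∫ z, |φ z - ψ z.1| ∂μ := by
                simpa [Real.norm_eq_abs] using
                  norm_integral_le_integral_norm (μ := μ) (f := fun z => φ z - ψ z.1)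
            _ ≤ ∫ z, w z ∂μ := integral_mono (hφint.sub hψ₁int).abs hIntw hptw
        refine h1.trans ?_
        have hkey : ∀ ε : ℝ, 0 < ε → (∫ z, w z ∂μ) ≤ ε + S / ε := by
          intro ε hε
          have hmon : (∫ z, w z ∂μ) ≤ ∫ z, (ε + w z ^ 2 / ε) ∂μ := by
            refine integral_mono hIntw ((integrable_const ε).add (hIntw2.div_const ε)) ?_
            intro z
            have h2 : w z * ε ≤ ε * ε + w z ^ 2 := by nlinarith [sq_nonneg (w z - ε)]
            calc w z = w z * ε / ε := by field_simp
              _ ≤ (ε * ε + w z ^ 2) / ε := by gcongr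
              _ = ε + w z ^ 2 / ε := by field_simp
          rw [integral_add (integrable_const ε) (hIntw2.div_const ε), integral_const,
            probReal_univ, one_smul, integral_div, ← hSint] at hmon
          exact hmon
        rcases eq_or_lt_of_le hS0 with hS0' | hSpos
        · have h2 : (∫ z, w z ∂μ) ≤ 0 := by
            refine le_of_forall_pos_le_add ?_
            intro ε hε
            have h3 := hkey ε hε
            rw [← hS0', zero_div, add_zero] at h3
            linarith
          rw [← hS0', Real.sqrt_zero, mul_zero]
          exact h2
        · have h2 := hkey (Real.sqrt S) (Real.sqrt_pos.mpr hSpos)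
          rwa [Real.div_sqrt, ← two_mul] at h2
      have hT2 : |(∫ z, ψ z.1 ∂μ) - ∫ y, ψ y ∂ν₀| ≤ Lr * D := by
        rw [← hfst]
        have hψb : ∀ y, |ψ y| ≤ 1 := fun y => hφb _
        have hψlip : ∀ a b, |ψ a - ψ b| ≤ Lr * dist a b := by
          intro a b
          have h1 := hφlip.dist_le_mul (a, u a) (b, u b)
          rw [Prod.dist_eq, Real.dist_eq, NNReal.coe_one, one_mul] at h1
          have h2 := hulip.dist_le_mul a b
          have hd0 : (0:ℝ) ≤ dist a b := dist_nonneg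
          have hc : (Real.toNNReal Lu : ℝ) ≤ Lr := by
            rw [Real.coe_toNNReal']
            exact max_le (le_max_right _ _) (le_trans zero_le_one hLr1)
          refine h1.trans (max_le (le_mul_of_one_le_left hd0 hLr1) (h2.trans ?_))
          exact mul_le_mul_of_nonneg_right hc hd0
        set ψ' : EuclideanSpace ℝ (Fin d) → ℝ := fun y => ψ y / Lr with hψ'def
        have hmem : |(∫ y, ψ' y ∂(μ.map Prod.fst)) - ∫ y, ψ' y ∂ν₀| ∈
            { r : ℝ | ∃ φ' : EuclideanSpace ℝ (Fin d) → ℝ, (∀ z, |φ' z| ≤ 1) ∧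
              LipschitzWith 1 φ' ∧
              r = |(∫ z, φ' z ∂(μ.map Prod.fst)) - ∫ z, φ' z ∂ν₀| } := by
          refine ⟨ψ', ?_, ?_, rfl⟩
          · intro y
            rw [hψ'def]
            rw [abs_div, abs_of_pos hLr0]
            exact div_le_one_of_le₀ ((hψb y).trans hLr1) hLr0.le
          · refine LipschitzWith.of_dist_le_mul fun a b => ?_
            rw [Real.dist_eq, hψ'def, NNReal.coe_one, one_mul]
            rw [div_sub_div_same, abs_div, abs_of_pos hLr0]
            exact (div_le_iff₀ hLr0).mpr (by rw [mul_comm]; exact hψlip a b)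
        have hbdd : BddAbove { r : ℝ | ∃ φ' : EuclideanSpace ℝ (Fin d) → ℝ,
            (∀ z, |φ' z| ≤ 1) ∧ LipschitzWith 1 φ' ∧
            r = |(∫ z, φ' z ∂(μ.map Prod.fst)) - ∫ z, φ' z ∂ν₀| } := by
          refine ⟨2, ?_⟩
          rintro r ⟨φ', hφ'b, hφ'lip, rfl⟩
          have hb1 : ‖∫ z, φ' z ∂(μ.map Prod.fst)‖ ≤ 1 := by
            have := norm_integral_le_of_norm_le_const (μ := μ.map Prod.fst) (f := φ')
              (C := 1) (by filter_upwards with z; rw [Real.norm_eq_abs]; exact hφ'b z)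
            simpa using this
          have hb2 : ‖∫ z, φ' z ∂ν₀‖ ≤ 1 := by
            have := norm_integral_le_of_norm_le_const (μ := ν₀) (f := φ')
              (C := 1) (by filter_upwards with z; rw [Real.norm_eq_abs]; exact hφ'b z)
            simpa using this
          calc |(∫ z, φ' z ∂(μ.map Prod.fst)) - ∫ z, φ' z ∂ν₀|
              ≤ ‖∫ z, φ' z ∂(μ.map Prod.fst)‖ + ‖∫ z, φ' z ∂ν₀‖ := by
                rw [Real.norm_eq_abs, Real.norm_eq_abs]; exact abs_sub _ _
            _ ≤ 2 := by linarith
        have hle : |(∫ y, ψ' y ∂(μ.map Prod.fst)) - ∫ y, ψ' y ∂ν₀| ≤ D :=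
          le_csSup hbdd hmem
        have he1 : (∫ y, ψ' y ∂(μ.map Prod.fst)) = (∫ y, ψ y ∂(μ.map Prod.fst)) / Lr :=
          integral_div Lr ψ
        have he2 : (∫ y, ψ' y ∂ν₀) = (∫ y, ψ y ∂ν₀) / Lr := integral_div Lr ψ
        rw [he1, he2, div_sub_div_same, abs_div, abs_of_pos hLr0, div_le_iff₀ hLr0,
          mul_comm] at hle
        exact hle
      calc |(∫ z, φ z ∂μ) - ∫ z, φ z ∂(monokinetic ρ u)|
          = |((∫ z, φ z ∂μ) - ∫ z, ψ z.1 ∂μ) + ((∫ z, ψ z.1 ∂μ) - ∫ y, ψ y ∂ν₀)| := by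
            rw [hmono]; ring_nf
        _ ≤ |(∫ z, φ z ∂μ) - ∫ z, ψ z.1 ∂μ| + |(∫ z, ψ z.1 ∂μ) - ∫ y, ψ y ∂ν₀| :=
            abs_add_le _ _
        _ ≤ 2 * Real.sqrt S + Lr * D := add_le_add hT1 hT2
    · exact add_nonneg (by positivity) (mul_nonneg hLr0.le hD0)
  have hdBL0 : 0 ≤ dBL μ (monokinetic ρ u) :=
    Real.sSup_nonneg (by rintro r ⟨φ, -, -, rfl⟩; exact abs_nonneg _)
  have hsq : dBL μ (monokinetic ρ u) ^ 2 ≤ (2 * Real.sqrt S + Lr * D) ^ 2 :=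
    pow_le_pow_left₀ hdBL0 key 2
  refine hsq.trans ?_
  have hss := Real.sq_sqrt hS0
  have hs0 := Real.sqrt_nonneg S
  nlinarith [sq_nonneg (Real.sqrt S - Lr * D), sq_nonneg (Real.sqrt S + Lr * D),
    mul_nonneg hD0 hD0, mul_nonneg hS0 (mul_nonneg hLr0.le hLr0.le),
    mul_nonneg (mul_nonneg hD0 hD0) (mul_nonneg hLr0.le hLr0.le),
    mul_le_mul_of_nonneg_left hLr1 hLr0.le, sq_nonneg (Lr*D), hS0, hD0]
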